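/- The function V(x₀, x₁) = x₀⁴ + 9x₀² + 3x₁² satisfies V(0) = 0, V(x) > 0 for x ≠ 0, and ∇V(x)·f(x) ≤ 0 for all (x₀, x₁) ∈ ℝ², where f(x₀, x₁) = (-x₀⁵ - 4x₀³ - 9x₀x₁⁴ + 3x₀x₁³, -3x₀⁴x₁² - 10x₀³x₁ + 3x₀x₁² - 7x₁³). -/

import Mathlib

noncomputable def gvec (x : EuclideanSpace ℝ (Fin 2)) : EuclideanSpace ℝ (Fin 2) :=
  (WithLp.equiv 2 (Fin 2 → ℝ)).symm ![4 * (x 0) ^ 3 + 18 * (x 0), 6 * (x 1)]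

lemma gvec_apply0 (x : EuclideanSpace ℝ (Fin 2)) : gvec x 0 = 4 * (x 0) ^ 3 + 18 * (x 0) := rfl
lemma gvec_apply1 (x : EuclideanSpace ℝ (Fin 2)) : gvec x 1 = 6 * (x 1) := rfl

lemma proj_apply' (i : Fin 2) (v : EuclideanSpace ℝ (Fin 2)) :
    (EuclideanSpace.proj i : EuclideanSpace ℝ (Fin 2) →L[ℝ] ℝ) v = v i := rfl

lemma hasGrad (x : EuclideanSpace ℝ (Fin 2)) :
    HasGradientAt (fun y : EuclideanSpace ℝ (Fin 2) => (y 0 : ℝ) ^ 4 + 9 * (y 0) ^ 2 + 3 * (y 1) ^ 2)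
      (gvec x) x := by
  rw [hasGradientAt_iff_hasFDerivAt]
  have h0 : HasFDerivAt (𝕜 := ℝ) (fun y : EuclideanSpace ℝ (Fin 2) => (y 0 : ℝ))
      (EuclideanSpace.proj (0 : Fin 2)) x :=
    (EuclideanSpace.proj (0 : Fin 2) : EuclideanSpace ℝ (Fin 2) →L[ℝ] ℝ).hasFDerivAt
  have h1 : HasFDerivAt (𝕜 := ℝ) (fun y : EuclideanSpace ℝ (Fin 2) => (y 1 : ℝ))
      (EuclideanSpace.proj (1 : Fin 2)) x :=
    (EuclideanSpace.proj (1 : Fin 2) : EuclideanSpace ℝ (Fin 2) →L[ℝ] ℝ).hasFDerivAt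
  have p4 := (hasDerivAt_pow 4 (x 0)).comp_hasFDerivAt x h0
  have p2 := (hasDerivAt_pow 2 (x 0)).comp_hasFDerivAt x h0
  have q2 := (hasDerivAt_pow 2 (x 1)).comp_hasFDerivAt x h1
  have hD := (p4.add (p2.const_smul (9:ℝ))).add (q2.const_smul (3:ℝ))
  have hD' : HasFDerivAt (𝕜 := ℝ)
      (fun y : EuclideanSpace ℝ (Fin 2) => (y 0 : ℝ) ^ 4 + 9 * (y 0) ^ 2 + 3 * (y 1) ^ 2)
      ((((4 : ℕ) : ℝ) * (x 0) ^ 3) • EuclideanSpace.proj (0 : Fin 2)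
        + (9 : ℝ) • ((((2 : ℕ) : ℝ) * (x 0) ^ 1) • EuclideanSpace.proj (0 : Fin 2))
        + (3 : ℝ) • ((((2 : ℕ) : ℝ) * (x 1) ^ 1) • EuclideanSpace.proj (1 : Fin 2))) x := by
    exact hD
  refine hD'.congr_fderiv ?_
  apply ContinuousLinearMap.ext
  intro v
  simp only [ContinuousLinearMap.add_apply, ContinuousLinearMap.smul_apply,
    proj_apply', smul_eq_mul, InnerProductSpace.toDual_apply_apply]
  have : inner ℝ (gvec x) v = ∑ i, gvec x i * v i := by
    simp [PiLp.inner_apply, RCLike.inner_apply, mul_comm]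
  rw [this, Fin.sum_univ_two, gvec_apply0, gvec_apply1]
  push_cast
  ring


/-- Lyapunov verification for
`ẋ₀ = -x₀⁵-4x₀³-9x₀x₁⁴+3x₀x₁³, ẋ₁ = -3x₀⁴x₁²-10x₀³x₁+3x₀x₁²-7x₁³`
with `V = x₀⁴+9x₀²+3x₁²`. -/
theorem lyapunov_example_quartic
    (V : EuclideanSpace ℝ (Fin 2) → ℝ)
    (hV : ∀ x, V x = (x 0) ^ 4 + 9 * (x 0) ^ 2 + 3 * (x 1) ^ 2)
    (f : EuclideanSpace ℝ (Fin 2) → EuclideanSpace ℝ (Fin 2))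
    (hf : ∀ x, f x 0 = -(x 0) ^ 5 - 4 * (x 0) ^ 3
        - 9 * (x 0) * (x 1) ^ 4 + 3 * (x 0) * (x 1) ^ 3
      ∧ f x 1 = -3 * (x 0) ^ 4 * (x 1) ^ 2 - 10 * (x 0) ^ 3 * (x 1)
        + 3 * (x 0) * (x 1) ^ 2 - 7 * (x 1) ^ 3) :
    V 0 = 0 ∧ (∀ x, x ≠ 0 → 0 < V x) ∧
    ∀ x, ∑ i, gradient V x i * f x i ≤ 0 := by
  have hVfun : V = fun y : EuclideanSpace ℝ (Fin 2) =>
      (y 0 : ℝ) ^ 4 + 9 * (y 0) ^ 2 + 3 * (y 1) ^ 2 := funext hV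
  refine ⟨by simp [hV], ?_, ?_⟩
  · intro x hx
    rw [hV]
    rcases (by
      by_contra h
      push_neg at h
      exact hx (by
        ext i
        fin_cases i <;> simp [h.1, h.2]) : x 0 ≠ 0 ∨ x 1 ≠ 0) with h | h
    · nlinarith [sq_nonneg (x 0), sq_nonneg (x 1), sq_nonneg ((x 0)^2), sq_pos_of_ne_zero h]
    · nlinarith [sq_nonneg (x 0), sq_nonneg ((x 0)^2), sq_pos_of_ne_zero h]
  · intro x
    have hg : gradient V x = gvec x := by
      rw [hVfun]; exact (hasGrad x).gradient
    rw [hg, Fin.sum_univ_two, gvec_apply0, gvec_apply1, (hf x).1, (hf x).2]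
    set a := x 0; set b := x 1
    nlinarith [sq_nonneg (a^3 + b^2), sq_nonneg (a*b - 3*a*b^2), sq_nonneg (a*b - b^2),
      sq_nonneg (a^2*b + 3*a^2*b^2), sq_nonneg (a^4 - b^2), sq_nonneg (6*a^2 - b^2),
      sq_nonneg (b^2), sq_nonneg (a*b^2), sq_nonneg (a^2), sq_nonneg (a^2*b^2),
      sq_nonneg (a^3), sq_nonneg (a^4)]
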